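/- A symmetric monoidal category (C,⊗,I) is cartesian monoidal — that is, I is a terminal object and, for all objects X and Y, the object X⊗Y with projections (id_X ⊗ ε_Y) : X⊗Y → X and (ε_X ⊗ id_Y) : X⊗Y → Y (up to unitors) is a categorical product of X and Y — if and only if: every object X carries a counital comagma structure (δ_X : X → X⊗X, ε_X : X → I) with δ_X ; (id_X ⊗ ε_X) = id_X = δ_X ; (ε_X ⊗ id_X) (up to unitors); every morphism f : X → Y is a comagma homomorphism, i.e., f ; δ_Y = δ_X ; (f ⊗ f) and f ; ε_Y = ε_X; and the structure is uniform: ε_{X⊗Y} = ε_X ⊗ ε_Y, ε_I = id_I, δ_I = id (up to unitors), and δ_{X⊗Y} = (δ_X ⊗ δ_Y) ; (id_X ⊗ σ_{X,Y} ⊗ id_Y). -/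

import Mathlib

/-!
STATEMENT 3: Refined Fox theorem.

A symmetric monoidal category is cartesian monoidal (the unit is terminal and each
`X ⊗ Y`, with the projections built from the discard maps, is a binary product) if and
only if every object carries a counital comagma structure, every morphism is a comagma
homomorphism, and the structure is uniform.
-/

open CategoryTheory CategoryTheory.Limits CategoryTheory.MonoidalCategory

universe v u

variable (C : Type u) [Category.{v} C] [MonoidalCategory C] [SymmetricCategory C]

/-- A symmetric monoidal category is *cartesian monoidal* when its unit is a terminal
object (witnessed by the family `ε` of unique morphisms into it) and, for all objects
`X` and `Y`, the object `X ⊗ Y` with projections `(id_X ⊗ ε_Y) : X ⊗ Y ⟶ X` and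
`(ε_X ⊗ id_Y) : X ⊗ Y ⟶ Y` (up to unitors) is a categorical product of `X` and `Y`. -/
def CartesianMonoidal : Prop :=
  ∃ ε : ∀ X : C, X ⟶ 𝟙_ C,
    (∀ (X : C) (f : X ⟶ 𝟙_ C), f = ε X) ∧
    ∀ X Y : C,
      Nonempty (IsLimit (BinaryFan.mk
        ((X ◁ ε Y) ≫ (ρ_ X).hom) ((ε X ▷ Y) ≫ (λ_ Y).hom)))

/-- Every object carries a counital comagma structure `(δ, ε)`, every morphism is a
comagma homomorphism, and the structure is uniform across the monoidal category. -/
def UniformComagmaStructure : Prop :=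
  ∃ (δ : ∀ X : C, X ⟶ X ⊗ X) (ε : ∀ X : C, X ⟶ 𝟙_ C),
    -- counitality (up to unitors)
    (∀ X : C, δ X ≫ (X ◁ ε X) ≫ (ρ_ X).hom = 𝟙 X) ∧
    (∀ X : C, δ X ≫ (ε X ▷ X) ≫ (λ_ X).hom = 𝟙 X) ∧
    -- every morphism is a comagma homomorphism
    (∀ (X Y : C) (f : X ⟶ Y), f ≫ δ Y = δ X ≫ (f ⊗ₘ f)) ∧
    (∀ (X Y : C) (f : X ⟶ Y), f ≫ ε Y = ε X) ∧
    -- uniformity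
    (∀ X Y : C, ε (X ⊗ Y) = (ε X ⊗ₘ ε Y) ≫ (λ_ (𝟙_ C)).hom) ∧
    (ε (𝟙_ C) = 𝟙 (𝟙_ C)) ∧
    (δ (𝟙_ C) = (λ_ (𝟙_ C)).inv) ∧
    (∀ X Y : C, δ (X ⊗ Y) = (δ X ⊗ₘ δ Y) ≫ tensorμ X X Y Y)

section FoxAux
variable {C : Type u} [Category.{v} C] [MonoidalCategory C] [SymmetricCategory C]

lemma fox_braiding_unit : (β_ (𝟙_ C) (𝟙_ C)).hom = 𝟙 _ := by
  have h := braiding_leftUnitor (C := C) (𝟙_ C)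
  rw [← unitors_equal] at h
  simpa using h =≫ (λ_ (𝟙_ C)).inv

lemma fox_tensorμ_mid (X Y : C) :
    tensorμ X (𝟙_ C) (𝟙_ C) Y ≫ ((ρ_ X).hom ⊗ₘ (λ_ Y).hom) = ((ρ_ X).hom ⊗ₘ (λ_ Y).hom) := by
  rw [tensorμ, fox_braiding_unit]
  monoidal

lemma fox_L1 (X Y : C) (u : X ⟶ 𝟙_ C) (v : Y ⟶ 𝟙_ C) :
    tensorμ X X Y Y ≫ (((X ◁ v) ≫ (ρ_ X).hom) ⊗ₘ ((u ▷ Y) ≫ (λ_ Y).hom)) =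
      (((X ◁ u) ≫ (ρ_ X).hom) ⊗ₘ ((v ▷ Y) ≫ (λ_ Y).hom)) := by
  have h := tensorμ_natural (𝟙 X) u v (𝟙 Y)
  calc tensorμ X X Y Y ≫ (((X ◁ v) ≫ (ρ_ X).hom) ⊗ₘ ((u ▷ Y) ≫ (λ_ Y).hom))
      = tensorμ X X Y Y ≫ ((𝟙 X ⊗ₘ v) ⊗ₘ (u ⊗ₘ 𝟙 Y)) ≫ ((ρ_ X).hom ⊗ₘ (λ_ Y).hom) := by
        rw [tensorHom_comp_tensorHom]; simp [MonoidalCategory.tensorHom_def]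
    _ = ((𝟙 X ⊗ₘ u) ⊗ₘ (v ⊗ₘ 𝟙 Y)) ≫ tensorμ X (𝟙_ C) (𝟙_ C) Y ≫ ((ρ_ X).hom ⊗ₘ (λ_ Y).hom) := by
        rw [← Category.assoc, ← h, Category.assoc]
    _ = ((𝟙 X ⊗ₘ u) ⊗ₘ (v ⊗ₘ 𝟙 Y)) ≫ ((ρ_ X).hom ⊗ₘ (λ_ Y).hom) := by rw [fox_tensorμ_mid]
    _ = (((X ◁ u) ≫ (ρ_ X).hom) ⊗ₘ ((v ▷ Y) ≫ (λ_ Y).hom)) := by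
        rw [tensorHom_comp_tensorHom]; simp [MonoidalCategory.tensorHom_def]

lemma fox_L2 (X Y : C) (u : X ⟶ 𝟙_ C) (v : Y ⟶ 𝟙_ C) :
    tensorμ X X Y Y ≫ ((X ⊗ Y) ◁ ((u ⊗ₘ v) ≫ (λ_ (𝟙_ C)).hom)) ≫ (ρ_ (X ⊗ Y)).hom =
      (((X ◁ u) ≫ (ρ_ X).hom) ⊗ₘ ((Y ◁ v) ≫ (ρ_ Y).hom)) := by
  have h := tensorμ_natural (𝟙 X) u (𝟙 Y) v
  calc tensorμ X X Y Y ≫ ((X ⊗ Y) ◁ ((u ⊗ₘ v) ≫ (λ_ (𝟙_ C)).hom)) ≫ (ρ_ (X ⊗ Y)).hom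
      = tensorμ X X Y Y ≫ ((𝟙 X ⊗ₘ 𝟙 Y) ⊗ₘ (u ⊗ₘ v)) ≫ ((X ⊗ Y) ◁ (λ_ (𝟙_ C)).hom) ≫
          (ρ_ (X ⊗ Y)).hom := by
        simp only [MonoidalCategory.tensorHom_def]
        monoidal
    _ = ((𝟙 X ⊗ₘ u) ⊗ₘ (𝟙 Y ⊗ₘ v)) ≫ tensorμ X (𝟙_ C) Y (𝟙_ C) ≫
          ((X ⊗ Y) ◁ (λ_ (𝟙_ C)).hom) ≫ (ρ_ (X ⊗ Y)).hom := by
        rw [← Category.assoc, ← h, Category.assoc]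
    _ = ((𝟙 X ⊗ₘ u) ⊗ₘ (𝟙 Y ⊗ₘ v)) ≫ ((ρ_ X).hom ⊗ₘ (ρ_ Y).hom) := by
        rw [← rightUnitor_monoidal]
    _ = (((X ◁ u) ≫ (ρ_ X).hom) ⊗ₘ ((Y ◁ v) ≫ (ρ_ Y).hom)) := by
        rw [tensorHom_comp_tensorHom]; simp [MonoidalCategory.tensorHom_def]

lemma fox_L3 (X Y : C) (u : X ⟶ 𝟙_ C) (v : Y ⟶ 𝟙_ C) :
    tensorμ X X Y Y ≫ (((u ⊗ₘ v) ≫ (λ_ (𝟙_ C)).hom) ▷ (X ⊗ Y)) ≫ (λ_ (X ⊗ Y)).hom =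
      (((u ▷ X) ≫ (λ_ X).hom) ⊗ₘ ((v ▷ Y) ≫ (λ_ Y).hom)) := by
  have h := tensorμ_natural u (𝟙 X) v (𝟙 Y)
  calc tensorμ X X Y Y ≫ (((u ⊗ₘ v) ≫ (λ_ (𝟙_ C)).hom) ▷ (X ⊗ Y)) ≫ (λ_ (X ⊗ Y)).hom
      = tensorμ X X Y Y ≫ ((u ⊗ₘ v) ⊗ₘ (𝟙 X ⊗ₘ 𝟙 Y)) ≫ ((λ_ (𝟙_ C)).hom ▷ (X ⊗ Y)) ≫
          (λ_ (X ⊗ Y)).hom := by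
        simp only [MonoidalCategory.tensorHom_def]
        monoidal
    _ = ((u ⊗ₘ 𝟙 X) ⊗ₘ (v ⊗ₘ 𝟙 Y)) ≫ tensorμ (𝟙_ C) X (𝟙_ C) Y ≫
          ((λ_ (𝟙_ C)).hom ▷ (X ⊗ Y)) ≫ (λ_ (X ⊗ Y)).hom := by
        rw [← Category.assoc, ← h, Category.assoc]
    _ = ((u ⊗ₘ 𝟙 X) ⊗ₘ (v ⊗ₘ 𝟙 Y)) ≫ ((λ_ X).hom ⊗ₘ (λ_ Y).hom) := by
        rw [← leftUnitor_monoidal]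
    _ = (((u ▷ X) ≫ (λ_ X).hom) ⊗ₘ ((v ▷ Y) ≫ (λ_ Y).hom)) := by
        rw [tensorHom_comp_tensorHom]; simp [MonoidalCategory.tensorHom_def]

end FoxAux

/-- **Refined Fox theorem**: a symmetric monoidal category is cartesian monoidal iff it
carries a uniform, natural, counital comagma structure on every object. -/
theorem refined_fox :
    CartesianMonoidal C ↔ UniformComagmaStructure C := by
  constructor
  · rintro ⟨ε, huniq, hprod⟩
    have L : ∀ X Y : C, IsLimit (BinaryFan.mk
        ((X ◁ ε Y) ≫ (ρ_ X).hom) ((ε X ▷ Y) ≫ (λ_ Y).hom)) := fun X Y => (hprod X Y).some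
    have hεu : ε (𝟙_ C) = 𝟙 (𝟙_ C) := (huniq _ (𝟙 _)).symm
    have hεt : ∀ X Y : C, ε (X ⊗ Y) = (ε X ⊗ₘ ε Y) ≫ (λ_ (𝟙_ C)).hom :=
      fun X Y => (huniq _ _).symm
    set δ : ∀ X : C, X ⟶ X ⊗ X :=
      fun X => (BinaryFan.IsLimit.lift' (L X X) (𝟙 X) (𝟙 X)).1 with hδdef
    have hfst : ∀ X : C, δ X ≫ (X ◁ ε X) ≫ (ρ_ X).hom = 𝟙 X := fun X =>
      (BinaryFan.IsLimit.lift' (L X X) (𝟙 X) (𝟙 X)).2.1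
    have hsnd : ∀ X : C, δ X ≫ (ε X ▷ X) ≫ (λ_ X).hom = 𝟙 X := fun X =>
      (BinaryFan.IsLimit.lift' (L X X) (𝟙 X) (𝟙 X)).2.2
    refine ⟨δ, ε, hfst, hsnd, ?_, fun X Y f => (huniq _ _), hεt, hεu, ?_, ?_⟩
    · intro X Y f
      have hfε : f ≫ ε Y = ε X := (huniq _ _)
      apply BinaryFan.IsLimit.hom_ext (L Y Y)
      · calc ((f ≫ δ Y) ≫ (BinaryFan.mk ((Y ◁ ε Y) ≫ (ρ_ Y).hom)
              ((ε Y ▷ Y) ≫ (λ_ Y).hom)).fst : X ⟶ Y) = f ≫ δ Y ≫ (Y ◁ ε Y) ≫ (ρ_ Y).hom := by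
              simp
          _ = f := by rw [hfst]; simp
          _ = δ X ≫ f ▷ X ≫ Y ◁ (f ≫ ε Y) ≫ (ρ_ Y).hom := by
              rw [hfε]; simp [← whisker_exchange_assoc, reassoc_of% (hfst X)]
          _ = ((δ X ≫ (f ⊗ₘ f)) ≫ (BinaryFan.mk ((Y ◁ ε Y) ≫ (ρ_ Y).hom)
              ((ε Y ▷ Y) ≫ (λ_ Y).hom)).fst : X ⟶ Y) := by
              simp [MonoidalCategory.tensorHom_def]
      · calc ((f ≫ δ Y) ≫ (BinaryFan.mk ((Y ◁ ε Y) ≫ (ρ_ Y).hom)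
              ((ε Y ▷ Y) ≫ (λ_ Y).hom)).snd : X ⟶ Y) = f ≫ δ Y ≫ (ε Y ▷ Y) ≫ (λ_ Y).hom := by
              simp
          _ = f := by rw [hsnd]; simp
          _ = δ X ≫ X ◁ f ≫ (f ≫ ε Y) ▷ Y ≫ (λ_ Y).hom := by
              rw [hfε]; simp [whisker_exchange_assoc, reassoc_of% (hsnd X)]
          _ = ((δ X ≫ (f ⊗ₘ f)) ≫ (BinaryFan.mk ((Y ◁ ε Y) ≫ (ρ_ Y).hom)
              ((ε Y ▷ Y) ≫ (λ_ Y).hom)).snd : X ⟶ Y) := by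
              simp [MonoidalCategory.tensorHom_def']
    · apply BinaryFan.IsLimit.hom_ext (L (𝟙_ C) (𝟙_ C))
      · have h := hfst (𝟙_ C)
        rw [hεu, MonoidalCategory.whiskerLeft_id, Category.id_comp] at h
        simp only [hεu, BinaryFan.mk_fst, MonoidalCategory.whiskerLeft_id, Category.id_comp]
        exact h.trans (by rw [← unitors_equal, Iso.inv_hom_id] :
          𝟙 (𝟙_ C) = (λ_ (𝟙_ C)).inv ≫ (ρ_ (𝟙_ C)).hom)
      · have h := hsnd (𝟙_ C)
        rw [hεu, MonoidalCategory.id_whiskerRight, Category.id_comp] at h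
        simp only [hεu, BinaryFan.mk_snd, MonoidalCategory.id_whiskerRight, Category.id_comp]
        exact h.trans (by rw [Iso.inv_hom_id] : 𝟙 (𝟙_ C) = (λ_ (𝟙_ C)).inv ≫ (λ_ (𝟙_ C)).hom)
    · intro X Y
      apply BinaryFan.IsLimit.hom_ext (L (X ⊗ Y) (X ⊗ Y))
      · calc (δ (X ⊗ Y) ≫ (BinaryFan.mk (((X ⊗ Y) ◁ ε (X ⊗ Y)) ≫ (ρ_ (X ⊗ Y)).hom)
              ((ε (X ⊗ Y) ▷ (X ⊗ Y)) ≫ (λ_ (X ⊗ Y)).hom)).fst : X ⊗ Y ⟶ X ⊗ Y) = 𝟙 _ := hfst _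
          _ = (δ X ⊗ₘ δ Y) ≫ (((X ◁ ε X) ≫ (ρ_ X).hom) ⊗ₘ ((Y ◁ ε Y) ≫ (ρ_ Y).hom)) := by
              rw [tensorHom_comp_tensorHom, hfst, hfst, id_tensorHom_id]
          _ = (δ X ⊗ₘ δ Y) ≫ tensorμ X X Y Y ≫
              ((X ⊗ Y) ◁ ((ε X ⊗ₘ ε Y) ≫ (λ_ (𝟙_ C)).hom)) ≫ (ρ_ (X ⊗ Y)).hom := by
              rw [fox_L2]
          _ = (((δ X ⊗ₘ δ Y) ≫ tensorμ X X Y Y) ≫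
              (BinaryFan.mk (((X ⊗ Y) ◁ ε (X ⊗ Y)) ≫ (ρ_ (X ⊗ Y)).hom)
              ((ε (X ⊗ Y) ▷ (X ⊗ Y)) ≫ (λ_ (X ⊗ Y)).hom)).fst : X ⊗ Y ⟶ X ⊗ Y) := by
              rw [← hεt]; simp
      · calc (δ (X ⊗ Y) ≫ (BinaryFan.mk (((X ⊗ Y) ◁ ε (X ⊗ Y)) ≫ (ρ_ (X ⊗ Y)).hom)
              ((ε (X ⊗ Y) ▷ (X ⊗ Y)) ≫ (λ_ (X ⊗ Y)).hom)).snd : X ⊗ Y ⟶ X ⊗ Y) = 𝟙 _ := hsnd _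
          _ = (δ X ⊗ₘ δ Y) ≫ (((ε X ▷ X) ≫ (λ_ X).hom) ⊗ₘ ((ε Y ▷ Y) ≫ (λ_ Y).hom)) := by
              rw [tensorHom_comp_tensorHom, hsnd, hsnd, id_tensorHom_id]
          _ = (δ X ⊗ₘ δ Y) ≫ tensorμ X X Y Y ≫
              (((ε X ⊗ₘ ε Y) ≫ (λ_ (𝟙_ C)).hom) ▷ (X ⊗ Y)) ≫ (λ_ (X ⊗ Y)).hom := by
              rw [fox_L3]
          _ = (((δ X ⊗ₘ δ Y) ≫ tensorμ X X Y Y) ≫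
              (BinaryFan.mk (((X ⊗ Y) ◁ ε (X ⊗ Y)) ≫ (ρ_ (X ⊗ Y)).hom)
              ((ε (X ⊗ Y) ▷ (X ⊗ Y)) ≫ (λ_ (X ⊗ Y)).hom)).snd : X ⊗ Y ⟶ X ⊗ Y) := by
              rw [← hεt]; simp
  · rintro ⟨δ, ε, h1, h2, hδ, hε, hεt, hε1, hδ1, hδt⟩
    refine ⟨ε, fun X f => by rw [← Category.comp_id f, ← hε1, hε], fun X Y => ⟨?_⟩⟩
    have key : δ (X ⊗ Y) ≫ (((X ◁ ε Y) ≫ (ρ_ X).hom) ⊗ₘ ((ε X ▷ Y) ≫ (λ_ Y).hom)) =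
        𝟙 (X ⊗ Y) := by
      rw [hδt, Category.assoc, fox_L1, tensorHom_comp_tensorHom, h1, h2, id_tensorHom_id]
    refine BinaryFan.IsLimit.mk _ (fun {T} f g => δ T ≫ (f ⊗ₘ g)) ?_ ?_ ?_
    · intro T f g
      calc (δ T ≫ (f ⊗ₘ g)) ≫ (X ◁ ε Y) ≫ (ρ_ X).hom
          = δ T ≫ f ▷ T ≫ X ◁ (g ≫ ε Y) ≫ (ρ_ X).hom := by simp [MonoidalCategory.tensorHom_def]
        _ = f := by
            rw [hε]; simp [← whisker_exchange_assoc, reassoc_of% (h1 T)]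
    · intro T f g
      calc (δ T ≫ (f ⊗ₘ g)) ≫ (ε X ▷ Y) ≫ (λ_ Y).hom
          = δ T ≫ T ◁ g ≫ (f ≫ ε X) ▷ Y ≫ (λ_ Y).hom := by simp [MonoidalCategory.tensorHom_def']
        _ = g := by
            rw [hε]; simp [whisker_exchange_assoc, reassoc_of% (h2 T)]
    · intro T f g m hm1 hm2
      simp only [BinaryFan.mk_fst, BinaryFan.mk_snd] at hm1 hm2
      calc m = m ≫ δ (X ⊗ Y) ≫
              (((X ◁ ε Y) ≫ (ρ_ X).hom) ⊗ₘ ((ε X ▷ Y) ≫ (λ_ Y).hom)) := by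
            rw [key]; exact (Category.comp_id m).symm
        _ = δ T ≫ ((m ≫ (X ◁ ε Y) ≫ (ρ_ X).hom) ⊗ₘ (m ≫ (ε X ▷ Y) ≫ (λ_ Y).hom)) := by
            rw [← Category.assoc, hδ T (X ⊗ Y) m, Category.assoc, tensorHom_comp_tensorHom]
        _ = δ T ≫ (f ⊗ₘ g) := by rw [← hm1, ← hm2]; rfl
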